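/- Let F be a real singular 3×3 matrix of rank 2 admitting a decomposition F = K⁻¹ E K⁻¹ with K = diag(f,f,1) for some nonzero f ∈ ℝ and E an essential matrix with ‖t‖ = 1. Then F satisfies both det F = 0 and the quintic polynomial constraint of the f+E+f elimination ideal; conversely, given such F, the matrix K F K (for the same f) satisfies the Demazure equations 2(KFK)(KFK)ᵀ(KFK) = trace((KFK)(KFK)ᵀ)(KFK). -/

import Mathlib

open Matrix

/-- The skew-symmetric cross-product matrix `[t]ₓ` of `t ∈ ℝ³`. -/
def crossMat (t : Fin 3 → ℝ) : Matrix (Fin 3) (Fin 3) ℝ :=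
  !![0, -t 2, t 1; t 2, 0, -t 0; -t 1, t 0, 0]

/-- A rank-2 matrix `F = K⁻¹ E K⁻¹`, `K = diag(f,f,1)`, `E` essential with
`‖t‖ = 1`, satisfies `det F = 0` and the quintic of the f+E+f elimination
ideal; moreover `K F K` satisfies the Demazure equations. -/
theorem fEf_variety (F : Matrix (Fin 3) (Fin 3) ℝ) (hrank : F.rank = 2)
    (f : ℝ) (hf : f ≠ 0)
    (K : Matrix (Fin 3) (Fin 3) ℝ) (hK : K = !![f, 0, 0; 0, f, 0; 0, 0, 1])
    (t : EuclideanSpace ℝ (Fin 3)) (ht : ‖t‖ = 1)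
    (R : Matrix (Fin 3) (Fin 3) ℝ) (hR : R * Rᵀ = 1) (hdet : R.det = 1)
    (E : Matrix (Fin 3) (Fin 3) ℝ) (hE : E = crossMat t * R)
    (hF : F = K⁻¹ * E * K⁻¹) :
    F.det = 0 ∧
    (F 0 0 * F 0 2 ^ 3 * F 2 0 + F 0 2 ^ 2 * F 1 0 * F 1 2 * F 2 0
      + F 0 0 * F 0 2 * F 1 2 ^ 2 * F 2 0 + F 1 0 * F 1 2 ^ 3 * F 2 0
      - F 0 0 * F 0 2 * F 2 0 ^ 3 - F 1 0 * F 1 2 * F 2 0 ^ 3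
      + F 0 1 * F 0 2 ^ 3 * F 2 1 + F 0 2 ^ 2 * F 1 1 * F 1 2 * F 2 1
      + F 0 1 * F 0 2 * F 1 2 ^ 2 * F 2 1 + F 1 1 * F 1 2 ^ 3 * F 2 1
      - F 0 1 * F 0 2 * F 2 0 ^ 2 * F 2 1 - F 1 1 * F 1 2 * F 2 0 ^ 2 * F 2 1
      - F 0 0 * F 0 2 * F 2 0 * F 2 1 ^ 2 - F 1 0 * F 1 2 * F 2 0 * F 2 1 ^ 2
      - F 0 1 * F 0 2 * F 2 1 ^ 3 - F 1 1 * F 1 2 * F 2 1 ^ 3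
      - F 0 0 ^ 2 * F 0 2 ^ 2 * F 2 2
      - 2 * F 0 0 * F 0 2 * F 1 0 * F 1 2 * F 2 2
      - 2 * F 0 1 * F 0 2 * F 1 1 * F 1 2 * F 2 2
      - F 0 1 ^ 2 * F 0 2 ^ 2 * F 2 2
      - F 1 0 ^ 2 * F 1 2 ^ 2 * F 2 2 - F 1 1 ^ 2 * F 1 2 ^ 2 * F 2 2
      + F 0 0 ^ 2 * F 2 0 ^ 2 * F 2 2 + F 1 0 ^ 2 * F 2 0 ^ 2 * F 2 2
      + 2 * F 0 0 * F 0 1 * F 2 0 * F 2 1 * F 2 2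
      + 2 * F 1 0 * F 1 1 * F 2 0 * F 2 1 * F 2 2
      + F 0 1 ^ 2 * F 2 1 ^ 2 * F 2 2 + F 1 1 ^ 2 * F 2 1 ^ 2 * F 2 2 = 0) ∧
    (2 : ℝ) • ((K * F * K) * (K * F * K)ᵀ * (K * F * K))
      = ((K * F * K) * (K * F * K)ᵀ).trace • (K * F * K) := by
  -- norm of t
  have ht' : t 0 ^ 2 + t 1 ^ 2 + t 2 ^ 2 = 1 := by
    have h1 := EuclideanSpace.norm_eq t
    rw [ht] at h1
    have h2 : (∑ i, ‖t i‖ ^ 2) = 1 := by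
      have := Real.sqrt_eq_one.mp h1.symm
      exact this
    simpa [Fin.sum_univ_three, Real.norm_eq_abs, sq_abs] using h2
  set B : Matrix (Fin 3) (Fin 3) ℝ := !![f⁻¹, 0, 0; 0, f⁻¹, 0; 0, 0, 1] with hB
  have hKB : K * B = 1 := by
    ext i j
    fin_cases i <;> fin_cases j <;>
      simp [hK, hB, Matrix.mul_apply, Fin.sum_univ_three, Matrix.one_apply,
        Matrix.vecHead, Matrix.vecTail, mul_inv_cancel₀ hf]
  have hBK : B * K = 1 := by
    ext i j
    fin_cases i <;> fin_cases j <;>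
      simp [hK, hB, Matrix.mul_apply, Fin.sum_univ_three, Matrix.one_apply,
        Matrix.vecHead, Matrix.vecTail, inv_mul_cancel₀ hf]
  have hKinv : K⁻¹ = B := inv_eq_right_inv hKB
  have hF' : F = B * E * B := by rw [hF, hKinv]
  have hKFK : K * F * K = E := by
    rw [hF']
    calc K * (B * E * B) * K = (K * B) * E * (B * K) := by
          simp only [Matrix.mul_assoc]
      _ = E := by rw [hKB, hBK, Matrix.one_mul, Matrix.mul_one]
  set X : Matrix (Fin 3) (Fin 3) ℝ := crossMat t with hX
  have hdetX : X.det = 0 := by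
    simp [hX, crossMat, Matrix.det_fin_three]; ring
  have hdetE : E.det = 0 := by
    rw [hE, Matrix.det_mul, hdet, mul_one]; exact hdetX
  have hdetF : F.det = 0 := by
    rw [hF', Matrix.det_mul, Matrix.det_mul, hdetE, mul_zero, zero_mul]
  -- structural Demazure for E
  have hEEt : E * Eᵀ = X * Xᵀ := by
    rw [hE, Matrix.transpose_mul]
    calc X * R * (Rᵀ * Xᵀ) = X * (R * Rᵀ) * Xᵀ := by simp only [Matrix.mul_assoc]
      _ = X * Xᵀ := by rw [hR, Matrix.mul_one]
  have hXXX : X * Xᵀ * X = (t 0 ^ 2 + t 1 ^ 2 + t 2 ^ 2) • X := by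
    ext i j
    fin_cases i <;> fin_cases j <;>
      simp [hX, crossMat, Matrix.mul_apply, Fin.sum_univ_three,
        Matrix.vecHead, Matrix.vecTail, Matrix.vecMul, dotProduct] <;> ring
  have hXXX1 : X * Xᵀ * X = X := by rw [hXXX, ht', one_smul]
  have htrX : (X * Xᵀ).trace = 2 := by
    have : (X * Xᵀ).trace = 2 * (t 0 ^ 2 + t 1 ^ 2 + t 2 ^ 2) := by
      simp [hX, crossMat, Matrix.trace_fin_three, Matrix.mul_apply,
        Fin.sum_univ_three, Matrix.vecHead, Matrix.vecTail, Matrix.vecMul, dotProduct]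
      ring
    rw [this, ht', mul_one]
  have hDemE : (2 : ℝ) • (E * Eᵀ * E) = (E * Eᵀ).trace • E := by
    rw [hEEt, htrX]
    have : X * Xᵀ * E = E := by
      rw [hE, ← Matrix.mul_assoc, hXXX1]
    rw [this]
  refine ⟨hdetF, ?_, by rw [hKFK]; exact hDemE⟩
  -- quintic part
  set c : ℝ := (E * Eᵀ).trace with hc
  have hE00 : E 0 0 = f ^ 2 * F 0 0 := by
    rw [← hKFK]; simp [hK, Matrix.mul_apply, Fin.sum_univ_three, Matrix.vecHead, Matrix.vecTail, Matrix.vecMul, dotProduct]; ring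
  have hE01 : E 0 1 = f ^ 2 * F 0 1 := by
    rw [← hKFK]; simp [hK, Matrix.mul_apply, Fin.sum_univ_three, Matrix.vecHead, Matrix.vecTail, Matrix.vecMul, dotProduct]; ring
  have hE02 : E 0 2 = f * F 0 2 := by
    rw [← hKFK]; simp [hK, Matrix.mul_apply, Fin.sum_univ_three, Matrix.vecHead, Matrix.vecTail, Matrix.vecMul, dotProduct]
  have hE10 : E 1 0 = f ^ 2 * F 1 0 := by
    rw [← hKFK]; simp [hK, Matrix.mul_apply, Fin.sum_univ_three, Matrix.vecHead, Matrix.vecTail, Matrix.vecMul, dotProduct]; ring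
  have hE11 : E 1 1 = f ^ 2 * F 1 1 := by
    rw [← hKFK]; simp [hK, Matrix.mul_apply, Fin.sum_univ_three, Matrix.vecHead, Matrix.vecTail, Matrix.vecMul, dotProduct]; ring
  have hE12 : E 1 2 = f * F 1 2 := by
    rw [← hKFK]; simp [hK, Matrix.mul_apply, Fin.sum_univ_three, Matrix.vecHead, Matrix.vecTail, Matrix.vecMul, dotProduct]
  have hE20 : E 2 0 = f * F 2 0 := by
    rw [← hKFK]; simp [hK, Matrix.mul_apply, Fin.sum_univ_three, Matrix.vecHead, Matrix.vecTail, Matrix.vecMul, dotProduct]; ring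
  have hE21 : E 2 1 = f * F 2 1 := by
    rw [← hKFK]; simp [hK, Matrix.mul_apply, Fin.sum_univ_three, Matrix.vecHead, Matrix.vecTail, Matrix.vecMul, dotProduct]; ring
  have hE22 : E 2 2 = F 2 2 := by
    rw [← hKFK]; simp [hK, Matrix.mul_apply, Fin.sum_univ_three, Matrix.vecHead, Matrix.vecTail, Matrix.vecMul, dotProduct]
  have h02 := congrFun (congrFun hDemE 0) 2
  have h12 := congrFun (congrFun hDemE 1) 2
  have h20 := congrFun (congrFun hDemE 2) 0
  have h21 := congrFun (congrFun hDemE 2) 1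
  simp only [Matrix.smul_apply, smul_eq_mul, Matrix.mul_apply,
    Matrix.transpose_apply, Fin.sum_univ_three] at h02 h12 h20 h21
  rw [hE00, hE01, hE02, hE10, hE11, hE12, hE20, hE21, hE22] at h02 h12 h20 h21
  have key : f ^ 6 *
      (F 0 0 * F 0 2 ^ 3 * F 2 0 + F 0 2 ^ 2 * F 1 0 * F 1 2 * F 2 0
      + F 0 0 * F 0 2 * F 1 2 ^ 2 * F 2 0 + F 1 0 * F 1 2 ^ 3 * F 2 0
      - F 0 0 * F 0 2 * F 2 0 ^ 3 - F 1 0 * F 1 2 * F 2 0 ^ 3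
      + F 0 1 * F 0 2 ^ 3 * F 2 1 + F 0 2 ^ 2 * F 1 1 * F 1 2 * F 2 1
      + F 0 1 * F 0 2 * F 1 2 ^ 2 * F 2 1 + F 1 1 * F 1 2 ^ 3 * F 2 1
      - F 0 1 * F 0 2 * F 2 0 ^ 2 * F 2 1 - F 1 1 * F 1 2 * F 2 0 ^ 2 * F 2 1
      - F 0 0 * F 0 2 * F 2 0 * F 2 1 ^ 2 - F 1 0 * F 1 2 * F 2 0 * F 2 1 ^ 2
      - F 0 1 * F 0 2 * F 2 1 ^ 3 - F 1 1 * F 1 2 * F 2 1 ^ 3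
      - F 0 0 ^ 2 * F 0 2 ^ 2 * F 2 2
      - 2 * F 0 0 * F 0 2 * F 1 0 * F 1 2 * F 2 2
      - 2 * F 0 1 * F 0 2 * F 1 1 * F 1 2 * F 2 2
      - F 0 1 ^ 2 * F 0 2 ^ 2 * F 2 2
      - F 1 0 ^ 2 * F 1 2 ^ 2 * F 2 2 - F 1 1 ^ 2 * F 1 2 ^ 2 * F 2 2
      + F 0 0 ^ 2 * F 2 0 ^ 2 * F 2 2 + F 1 0 ^ 2 * F 2 0 ^ 2 * F 2 2
      + 2 * F 0 0 * F 0 1 * F 2 0 * F 2 1 * F 2 2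
      + 2 * F 1 0 * F 1 1 * F 2 0 * F 2 1 * F 2 2
      + F 0 1 ^ 2 * F 2 1 ^ 2 * F 2 2 + F 1 1 ^ 2 * F 2 1 ^ 2 * F 2 2) = 0 := by
    linear_combination
      (f ^ 3 * (F 0 0 * F 2 0 + F 0 1 * F 2 1) / 2) * h02
      + (f ^ 3 * (F 1 0 * F 2 0 + F 1 1 * F 2 1) / 2) * h12
      - (f ^ 3 * (F 0 0 * F 0 2 + F 1 0 * F 1 2) / 2) * h20
      - (f ^ 3 * (F 0 1 * F 0 2 + F 1 1 * F 1 2) / 2) * h21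
  have h6 : (f : ℝ) ^ 6 ≠ 0 := pow_ne_zero 6 hf
  exact (mul_eq_zero.mp key).resolve_left h6
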